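/- arXiv:1211.3559 — 2 statements merged into one kernel-verified Lean document; each statement's English description precedes it below -/
import Mathlib

section
/- Let M be a free abelian group with a finite subset Π ⊆ M. Define a partial order on M by λ ≥ μ iff λ - μ is a nonnegative integer combination of elements of Π. If Π is a base of a reduced root system in M ⊗ ℚ, then for every dominant weight λ the set {μ dominant : μ ≤ λ} is finite. -/
set_option synthInstance.maxHeartbeats 1000000
set_option maxHeartbeats 2000000

open scoped TensorProduct BigOperators

open Submodule in
lemma aux_bound {V : Type*} [AddCommGroup V] [Module ℚ V]
    (R : Finset V) (c : V → (V →ₗ[ℚ] ℚ))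
    {ι : Type*} [Fintype ι] (b : ι → V)
    (hc2 : ∀ i, c (b i) (b i) = 2)
    (hrefl : ∀ i, ∀ α ∈ R, α - (c (b i) α) • (b i) ∈ R)
    (hbR : ∀ i, b i ∈ R)
    (hindep : LinearIndependent ℚ b)
    (lamv : V) :
    ∃ N : ℕ, ∀ (g : ι → ℕ) (muv : V),
        (∀ i, 0 ≤ c (b i) muv) →
        lamv - muv = ∑ i, (g i : ℚ) • b i →
        ∀ q, g q ≤ N := by
  classical
  set U : Submodule ℚ V := Submodule.span ℚ (Set.range b) with hU
  haveI : FiniteDimensional ℚ U := FiniteDimensional.span_of_finite ℚ (Set.finite_range b)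
  let β : Module.Basis ι ℚ U := Module.Basis.span hindep
  have hβ : ∀ i, (β i : V) = b i := fun i => congrArg Subtype.val (Module.Basis.span_apply hindep i)
  -- the set of roots, inside U
  let Rsub : Set U := {x : U | (x : V) ∈ R}
  have hRsubfin : Rsub.Finite :=
    Set.Finite.preimage (Subtype.val_injective.injOn) R.finite_toSet
  have hβR : ∀ i, β i ∈ Rsub := fun i => by
    show ((β i : U) : V) ∈ R; rw [hβ]; exact hbR i
  have hspanR : Submodule.span ℚ Rsub = ⊤ := by
    rw [eq_top_iff, ← β.span_eq]
    exact Submodule.span_mono (by rintro _ ⟨i, rfl⟩; exact hβR i)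
  -- the finite group of linear automorphisms of U preserving R
  let S : Subgroup (U ≃ₗ[ℚ] U) :=
  { carrier := {f | ∀ x : U, x ∈ Rsub → f x ∈ Rsub}
    mul_mem' := by
      intro f g hf hg x hx
      exact hf _ (hg _ hx)
    one_mem' := by intro x hx; exact hx
    inv_mem' := by
      intro f hf
      have hmt : Set.MapsTo f Rsub Rsub := fun y hy => hf y hy
      have hbij : Set.BijOn f Rsub Rsub :=
        (hRsubfin.injOn_iff_bijOn_of_mapsTo hmt).1 f.injective.injOn
      intro x hx
      obtain ⟨y, hy, hfy⟩ := hbij.surjOn hx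
      have : f⁻¹ x = y := by
        show f.symm x = y
        rw [LinearEquiv.symm_apply_eq]; exact hfy.symm
      show f⁻¹ x ∈ Rsub
      rw [this]; exact hy }
  haveI : Finite Rsub := hRsubfin.to_subtype
  haveI : Finite S := by
    apply Finite.of_injective
      (fun f : S => (fun x : Rsub => (⟨(f : U ≃ₗ[ℚ] U) x, f.2 x x.2⟩ : Rsub)))
    intro f g hfg
    have h1 : ((f : U ≃ₗ[ℚ] U) : U →ₗ[ℚ] U) = ((g : U ≃ₗ[ℚ] U) : U →ₗ[ℚ] U) := by
      apply LinearMap.ext_on hspanR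
      intro x hx
      exact congrArg Subtype.val (congrFun hfg ⟨x, hx⟩)
    have h2 : (f : U ≃ₗ[ℚ] U) = (g : U ≃ₗ[ℚ] U) :=
      LinearEquiv.toLinearMap_injective h1
    exact Subtype.ext h2
  haveI : Fintype S := Fintype.ofFinite S
  -- the invariant bilinear form
  let L : (S × ι) → (U →ₗ[ℚ] ℚ) :=
    fun j => (β.coord j.2).comp ((j.1 : U ≃ₗ[ℚ] U) : U →ₗ[ℚ] U)
  let Bl : U →ₗ[ℚ] Module.Dual ℚ U := ∑ j : S × ι, (L j).smulRight (L j)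
  have hBlsum : ∀ x y : U, Bl x y = ∑ j : S × ι, L j x * L j y := by
    intro x y
    simp [Bl, LinearMap.sum_apply, LinearMap.smulRight_apply, smul_eq_mul]
  have hBsymm : ∀ x y : U, Bl x y = Bl y x := by
    intro x y; rw [hBlsum, hBlsum]
    exact Finset.sum_congr rfl fun j _ => mul_comm _ _
  have hBnn : ∀ x : U, 0 ≤ Bl x x := by
    intro x; rw [hBlsum]
    exact Finset.sum_nonneg fun j _ => mul_self_nonneg _
  have hBpos : ∀ x : U, x ≠ 0 → 0 < Bl x x := by
    intro x hx
    rw [hBlsum]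
    have hrepr : ∃ p, β.repr x p ≠ 0 := by
      by_contra h
      push_neg at h
      apply hx
      have : β.repr x = 0 := by ext p; exact h p
      simpa [this] using (β.repr.symm_apply_apply x).symm
    obtain ⟨p, hp⟩ := hrepr
    refine Finset.sum_pos' (fun j _ => mul_self_nonneg _) ⟨(1, p), Finset.mem_univ _, ?_⟩
    have hL : L (1, p) x = β.repr x p := by
      simp [L, Module.Basis.coord_apply]
    rw [hL]
    exact mul_self_pos.mpr hp
  have hBinv : ∀ f : S, ∀ x y : U,
      Bl ((f : U ≃ₗ[ℚ] U) x) ((f : U ≃ₗ[ℚ] U) y) = Bl x y := by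
    intro f x y
    rw [hBlsum, hBlsum]
    refine Fintype.sum_equiv ((Equiv.mulRight f).prodCongr (Equiv.refl ι)) _ _ ?_
    intro j
    have hj : ∀ z : U, L (j.1 * f, j.2) z = L j ((f : U ≃ₗ[ℚ] U) z) := by
      intro z
      simp only [L, LinearMap.comp_apply, LinearEquiv.coe_coe]
      congr 1
    show L j ((f : U ≃ₗ[ℚ] U) x) * L j ((f : U ≃ₗ[ℚ] U) y) = _
    simp only [Equiv.prodCongr_apply, Equiv.coe_mulRight, Equiv.refl_apply, Prod.map]
    rw [hj x, hj y]
  -- reflections in the simple roots lie in S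
  have exists_refl : ∀ i : ι, ∃ f : S, ∀ x : U,
      (f : U ≃ₗ[ℚ] U) x = x - (c (b i) ↑x) • β i := by
    intro i
    let s : U →ₗ[ℚ] U := LinearMap.id - ((c (b i)).comp U.subtype).smulRight (β i)
    have hs : ∀ x : U, s x = x - (c (b i) ↑x) • β i := fun x => rfl
    have hcoe : ∀ x : U, ((s x : U) : V) = ↑x - (c (b i) ↑x) • b i := by
      intro x
      rw [hs]
      push_cast
      rw [hβ]
    have hss : ∀ x, s (s x) = x := by
      intro x
      have h1 : c (b i) ↑(s x) = - c (b i) ↑x := by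
        rw [hcoe x, map_sub, map_smul, hc2 i]
        simp only [smul_eq_mul]
        ring
      rw [hs (s x), h1, hs x, neg_smul, sub_neg_eq_add, sub_add_cancel]
    let f : U ≃ₗ[ℚ] U := LinearEquiv.ofLinear s s
      (LinearMap.ext hss) (LinearMap.ext hss)
    have hfS : f ∈ S := by
      intro x hx
      show ((s x : U) : V) ∈ R
      rw [hcoe x]
      exact hrefl i ↑x hx
    exact ⟨⟨f, hfS⟩, fun x => hs x⟩
  have hkey : ∀ i : ι, ∀ x : U,
      c (b i) ↑x * Bl (β i) (β i) = 2 * Bl x (β i) := by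
    intro i x
    obtain ⟨f, hf⟩ := exists_refl i
    have h1 := hBinv f x (β i)
    rw [hf x, hf (β i)] at h1
    have h2 : c (b i) ↑(β i) = 2 := by rw [hβ]; exact hc2 i
    rw [h2] at h1
    have h3 : (β i : U) - (2:ℚ) • β i = -β i := by
      rw [two_smul]; abel
    rw [h3] at h1
    simp only [map_sub, map_smul, map_neg, LinearMap.sub_apply, LinearMap.smul_apply,
      LinearMap.neg_apply, smul_eq_mul] at h1
    linarith [h1]
  -- Riesz representation
  have hker : ∀ x : U, Bl x = 0 → x = 0 := by
    intro x hx
    by_contra hx0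
    have h := hBpos x hx0
    rw [hx] at h
    simp at h
  have hinj : Function.Injective Bl :=
    LinearMap.ker_eq_bot.mp (LinearMap.ker_eq_bot'.mpr hker)
  have hsurj : Function.Surjective Bl :=
    (LinearMap.injective_iff_surjective_of_finrank_eq_finrank
      (Subspace.dual_finrank_eq).symm).1 hinj
  have hCS : ∀ x y : U, (Bl x y)^2 ≤ Bl x x * Bl y y := by
    intro x y
    rw [hBlsum, hBlsum, hBlsum]
    have h := Finset.sum_mul_sq_le_sq_mul_sq Finset.univ (fun j => L j x) (fun j => L j y)
    simpa only [pow_two] using h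
  let F : Module.Dual ℚ U := β.constr ℚ (fun i => Bl (β i) (β i) / 2 * c (b i) lamv)
  obtain ⟨u, hu⟩ := hsurj F
  choose w hwspec using fun q : ι => hsurj (β.coord q)
  obtain ⟨r, hr⟩ := Finset.exists_le (Finset.univ.image fun q : ι => Bl (w q) (w q) * Bl u u)
  obtain ⟨N, hN⟩ := exists_nat_ge r
  refine ⟨N, ?_⟩
  intro g muv hdom hsum q
  set ν : U := ∑ i : ι, (g i : ℚ) • β i with hνdef
  have hνcoe : (ν : V) = lamv - muv := by
    rw [hsum, hνdef]
    push_cast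
    simp_rw [hβ]
  have hgρ : ∀ p, β.repr ν p = (g p : ℚ) := by
    intro p
    rw [hνdef]
    exact congrFun (β.repr_sum_self (fun i => (g i : ℚ))) p
  have hν1 : Bl ν ν = ∑ i : ι, (g i : ℚ) * Bl (β i) ν := by
    have h0 : Bl ν = ∑ i : ι, (g i : ℚ) • Bl (β i) := by
      rw [hνdef, map_sum]
      simp_rw [map_smul]
    rw [h0]
    simp [LinearMap.sum_apply, LinearMap.smul_apply, smul_eq_mul]
  have hstep : ∀ i, Bl (β i) ν ≤ F (β i) := by
    intro i
    have hk := hkey i ν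
    have hsym : Bl ν (β i) = Bl (β i) ν := hBsymm _ _
    have hpos : 0 < Bl (β i) (β i) := hBpos _ (β.ne_zero i)
    have hcν : c (b i) ↑ν ≤ c (b i) lamv := by
      rw [hνcoe, map_sub]
      have := hdom i
      linarith
    have hFi : F (β i) = Bl (β i) (β i) / 2 * c (b i) lamv := β.constr_basis _ _ _
    have heq : Bl (β i) ν = Bl (β i) (β i) / 2 * c (b i) ↑ν := by
      rw [← hsym]
      field_simp
      linarith [hk]
    rw [heq, hFi]
    have := mul_le_mul_of_nonneg_left hcν (by positivity : (0:ℚ) ≤ Bl (β i) (β i) / 2)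
    linarith
  have hν2 : Bl ν ν ≤ Bl u ν := by
    rw [hν1]
    have hF : ∑ i : ι, (g i : ℚ) * F (β i) = F ν := by
      rw [hνdef, map_sum]
      simp_rw [map_smul, smul_eq_mul]
    calc ∑ i : ι, (g i : ℚ) * Bl (β i) ν
        ≤ ∑ i : ι, (g i : ℚ) * F (β i) :=
          Finset.sum_le_sum (fun i _ => mul_le_mul_of_nonneg_left (hstep i)
            (by positivity))
      _ = F ν := hF
      _ = Bl u ν := by rw [hu]
  have hν3 : Bl ν ν ≤ Bl u u := by
    nlinarith [hν2, hCS u ν, hBnn ν, hBnn u]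
  have hgq : ((g q : ℚ))^2 ≤ Bl (w q) (w q) * Bl u u := by
    have h1 : Bl (w q) ν = (g q : ℚ) := by
      have h := congrArg (fun φ : Module.Dual ℚ U => φ ν) (hwspec q)
      simpa [Module.Basis.coord_apply, hgρ q] using h
    have h2 := hCS (w q) ν
    rw [h1] at h2
    have h3 : Bl (w q) (w q) * Bl ν ν ≤ Bl (w q) (w q) * Bl u u :=
      mul_le_mul_of_nonneg_left hν3 (hBnn _)
    linarith
  have h4 : ((g q : ℚ))^2 ≤ (N : ℚ) := by
    have := hr _ (Finset.mem_image_of_mem _ (Finset.mem_univ q))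
    linarith
  by_contra hgN
  push_neg at hgN
  have h5 : (N : ℚ) + 1 ≤ (g q : ℚ) := by exact_mod_cast hgN
  have h6 : (0:ℚ) ≤ (N : ℚ) := by positivity
  nlinarith [h4, h5, h6]

/-- cf. Bourbaki VI §3 Prop. 3.  Let `M` be a free abelian group (of
finite rank) and `Π ⊆ M` a finite subset which is a base of a reduced root system `R` in
`M ⊗ ℚ` (with coroot pairing `c`): the elements of `Π` are roots, are linearly independent
over `ℚ`, every root is a nonnegative or nonpositive integer combination of `Π`, the
pairing is integral, `⟨α, α⟩ = 2`, reflections preserve `R` and `R` is reduced.  Order `M`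
by `λ ≥ μ` iff `λ - μ` is a nonnegative integer combination of `Π`, and call `μ` dominant
if `⟨α∨, μ⟩ ≥ 0` for all `α ∈ Π`.  Then for every dominant `λ` the set
`{μ dominant : μ ≤ λ}` is finite. -/
theorem dominant_weights_below_finite
    {M : Type*} [AddCommGroup M] [Module.Free ℤ M] [Module.Finite ℤ M]
    (Pi : Finset M) (R : Finset (ℚ ⊗[ℤ] M))
    (c : (ℚ ⊗[ℤ] M) → ((ℚ ⊗[ℤ] M) →ₗ[ℚ] ℚ))
    (hne : ∀ α ∈ R, α ≠ 0)
    (hc2 : ∀ α ∈ R, c α α = 2)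
    (hint : ∀ α ∈ R, ∀ β ∈ R, ∃ z : ℤ, c α β = (z : ℚ))
    (hrefl : ∀ α ∈ R, ∀ β ∈ R, β - (c α β) • α ∈ R)
    (hreduced : ∀ α ∈ R, ∀ t : ℚ, t • α ∈ R → t = 1 ∨ t = -1)
    (hPiR : ∀ p ∈ Pi, ((1 : ℚ) ⊗ₜ[ℤ] p) ∈ R)
    (hindep : LinearIndependent ℚ (fun p : {x // x ∈ Pi} => (1 : ℚ) ⊗ₜ[ℤ] (p : M)))
    (hbase : ∀ α ∈ R, ∃ g : {x // x ∈ Pi} → ℕ,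
      α = ∑ p ∈ Pi.attach, (g p : ℚ) • ((1 : ℚ) ⊗ₜ[ℤ] (p : M)) ∨
      α = -∑ p ∈ Pi.attach, (g p : ℚ) • ((1 : ℚ) ⊗ₜ[ℤ] (p : M)))
    (lam : M)
    (hlamdom : ∀ p ∈ Pi, 0 ≤ c ((1 : ℚ) ⊗ₜ[ℤ] p) ((1 : ℚ) ⊗ₜ[ℤ] lam)) :
    {μ : M | (∀ p ∈ Pi, 0 ≤ c ((1 : ℚ) ⊗ₜ[ℤ] p) ((1 : ℚ) ⊗ₜ[ℤ] μ)) ∧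
      ∃ g : {x // x ∈ Pi} → ℕ,
        lam - μ = ∑ p ∈ Pi.attach, (g p : ℤ) • (p : M)}.Finite := by
  classical
  obtain ⟨N, hN⟩ := aux_bound R c (fun p : {x // x ∈ Pi} => (1 : ℚ) ⊗ₜ[ℤ] (p : M))
    (fun p => hc2 _ (hPiR p p.2)) (fun p α hα => hrefl _ (hPiR p p.2) α hα)
    (fun p => hPiR p p.2) hindep ((1 : ℚ) ⊗ₜ[ℤ] lam)
  have hfin : {g : {x // x ∈ Pi} → ℕ | ∀ q, g q ≤ N}.Finite := by
    apply Set.Finite.subset (Set.Finite.pi (fun _ => Set.finite_Iic N))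
    intro g hg
    rw [Set.mem_pi]
    exact fun q _ => hg q
  apply Set.Finite.subset
    (hfin.image (fun g : {x // x ∈ Pi} → ℕ => lam - ∑ p ∈ Pi.attach, (g p : ℤ) • (p : M)))
  rintro μ ⟨hdom, g, hg⟩
  have hsum : (1 : ℚ) ⊗ₜ[ℤ] lam - (1 : ℚ) ⊗ₜ[ℤ] μ
      = ∑ p : {x // x ∈ Pi}, ((g p : ℕ) : ℚ) • ((1 : ℚ) ⊗ₜ[ℤ] (p : M)) := by
    have hT := congrArg (fun m : M => ((TensorProduct.mk ℤ ℚ M) 1) m) hg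
    simp only [map_sub, map_sum, LinearMap.map_smul, TensorProduct.mk_apply] at hT
    rw [Finset.univ_eq_attach, hT]
    refine Finset.sum_congr rfl fun p _ => ?_
    rw [← Int.cast_smul_eq_zsmul ℚ, Int.cast_natCast]
  refine ⟨g, fun q => ?_, ?_⟩
  · exact hN g ((1 : ℚ) ⊗ₜ[ℤ] μ) (fun p => hdom p p.2) hsum q
  · show lam - ∑ p ∈ Pi.attach, (g p : ℤ) • (p : M) = μ
    rw [← hg, sub_sub_cancel]
end

section
/- Let W be a finite group acting on a free abelian group M, and k a commutative ring. Then for any k-algebra k', the natural map k[M]^W ⊗_k k' → (k'[M])^W is an isomorphism. In other words, formation of the invariant ring of the group algebra under a permutation action commutes with arbitrary base change. -/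
open scoped TensorProduct

/-- The `W`-invariants `k[M]^W` of the group algebra, where `W` acts by permuting the
canonical basis `{e^λ}` through its action on `M`. -/
def groupAlgebraInvariants (k : Type*) [CommRing k] (M : Type*) [AddCommGroup M]
    (W : Type*) [Group W] [DistribMulAction W M] :
    Submodule k (AddMonoidAlgebra k M) where
  carrier := {f | ∀ w : W, Finsupp.mapDomain (fun m => w • m) f.coeff = f.coeff}
  add_mem' := by
    intro f g hf hg w
    rw [AddMonoidAlgebra.coeff_add, Finsupp.mapDomain_add, hf w, hg w]
  zero_mem' := by
    intro w
    rw [AddMonoidAlgebra.coeff_zero, Finsupp.mapDomain_zero]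
  smul_mem' := by
    intro c f hf w
    rw [AddMonoidAlgebra.coeff_smul, Finsupp.mapDomain_smul, hf w]

section Aux
open Finsupp

open scoped Classical

variable (k : Type*) [CommRing k] {M : Type*} [AddCommGroup M]
    {W : Type*} [Group W] [Finite W] [DistribMulAction W M]

variable (W) in
lemma mem_groupAlgebraInvariants_iff {f : AddMonoidAlgebra k M} :
    f ∈ groupAlgebraInvariants k M W ↔ ∀ (w : W) (m : M), f.coeff (w • m) = f.coeff m := by
  constructor
  · intro h w m
    have h2 := Finsupp.mapDomain_apply (MulAction.injective w) f.coeff m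
    rw [h w] at h2
    exact h2
  · intro h w
    have hfun : (fun m : M => w • m) = ⇑(MulAction.toPerm w : Equiv.Perm M) := rfl
    ext m
    rw [hfun, Finsupp.mapDomain_equiv_apply]
    simpa using h w⁻¹ m

variable (W) in
/-- The finite set underlying the orbit of `q.out`. -/
noncomputable def orbitFinset (q : Quotient (MulAction.orbitRel W M)) : Finset M :=
  (Set.finite_range (fun w : W => w • q.out)).toFinset

lemma mem_orbitFinset {q : Quotient (MulAction.orbitRel W M)} {m : M} :
    m ∈ orbitFinset W q ↔ Quotient.mk (MulAction.orbitRel W M) m = q := by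
  rw [orbitFinset, Set.Finite.mem_toFinset]
  have : m ∈ Set.range (fun w : W => w • q.out) ↔ m ∈ MulAction.orbit W q.out := Iff.rfl
  rw [this, ← MulAction.orbitRel_apply]
  constructor
  · intro h
    rw [← Quotient.out_eq q]
    exact Quotient.sound h
  · intro h
    rw [← Quotient.out_eq q] at h
    exact Quotient.exact h

variable (W) in
/-- The characteristic function of an orbit, as an element of `k[M]`. -/
noncomputable def orbitChar (q : Quotient (MulAction.orbitRel W M)) : AddMonoidAlgebra k M :=
  AddMonoidAlgebra.ofCoeff (∑ m ∈ orbitFinset W q, Finsupp.single m 1)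

lemma orbitChar_apply (q : Quotient (MulAction.orbitRel W M)) (m : M) :
    (orbitChar k W q).coeff m = if Quotient.mk (MulAction.orbitRel W M) m = q then 1 else 0 := by
  rw [orbitChar, AddMonoidAlgebra.coeff_ofCoeff, Finsupp.finset_sum_apply]
  rw [Finset.sum_congr rfl (fun x _ => Finsupp.single_apply)]
  rw [Finset.sum_ite_eq' (orbitFinset W q) m (fun _ => (1 : k))]
  simp [mem_orbitFinset]

variable (W) in
noncomputable def fromQ : (Quotient (MulAction.orbitRel W M) →₀ k) →ₗ[k] AddMonoidAlgebra k M :=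
  Finsupp.lsum k fun q => LinearMap.toSpanSingleton k _ (orbitChar k W q)

lemma fromQ_apply (g : Quotient (MulAction.orbitRel W M) →₀ k) (m : M) :
    (fromQ k W g).coeff m = g (Quotient.mk (MulAction.orbitRel W M) m) := by
  rw [fromQ, Finsupp.lsum_apply, AddMonoidAlgebra.coeff_finsuppSum, Finsupp.sum_apply]
  simp only [LinearMap.toSpanSingleton_apply]
  rw [Finsupp.sum_congr (g2 := fun q c => if Quotient.mk (MulAction.orbitRel W M) m = q
      then c else 0) ?_]
  rotate_left
  · intro q _
    show (g q • orbitChar k W q).coeff m = _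
    rw [AddMonoidAlgebra.coeff_smul, Finsupp.smul_apply, orbitChar_apply, smul_eq_mul, mul_ite, mul_one, mul_zero]
  have : (g.sum fun q c => if Quotient.mk (MulAction.orbitRel W M) m = q then c else 0)
      = if Quotient.mk (MulAction.orbitRel W M) m ∈ g.support
          then g (Quotient.mk (MulAction.orbitRel W M) m) else 0 :=
    Finsupp.sum_ite_eq g _ fun _ c => c
  rw [this]
  split_ifs with h
  · rfl
  · exact (Finsupp.notMem_support_iff.mp h).symm

lemma fromQ_mem (g : Quotient (MulAction.orbitRel W M) →₀ k) :
    fromQ k W g ∈ groupAlgebraInvariants k M W := by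
  rw [mem_groupAlgebraInvariants_iff]
  intro w m
  rw [fromQ_apply, fromQ_apply]
  congr 1
  exact Quotient.sound (MulAction.mem_orbit m w)

variable (W) in
noncomputable def toQ :
    groupAlgebraInvariants k M W →ₗ[k] (Quotient (MulAction.orbitRel W M) →₀ k) where
  toFun f := Finsupp.comapDomain Quotient.out (f : AddMonoidAlgebra k M).coeff
    Quotient.out_injective.injOn
  map_add' f g := by ext q; rfl
  map_smul' c f := by ext q; rfl

variable (W) in
noncomputable def invRepr :
    groupAlgebraInvariants k M W ≃ₗ[k] (Quotient (MulAction.orbitRel W M) →₀ k) :=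
  LinearEquiv.ofLinear (toQ k W)
    ((fromQ k W).codRestrict (groupAlgebraInvariants k M W) (fromQ_mem k))
    (by
      ext g q
      simp only [LinearMap.coe_comp, Function.comp_apply, LinearMap.id_coe, id_eq,
        LinearMap.codRestrict_apply, toQ, LinearMap.coe_mk, AddHom.coe_mk,
        Finsupp.comapDomain_apply]
      rw [fromQ_apply, Quotient.out_eq])
    (by
      ext f m
      simp only [LinearMap.coe_comp, Function.comp_apply, LinearMap.id_coe, id_eq,
        LinearMap.codRestrict_apply, toQ, LinearMap.coe_mk, AddHom.coe_mk]
      rw [fromQ_apply, Finsupp.comapDomain_apply]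
      obtain ⟨w, hw⟩ := Quotient.mk_out (s := MulAction.orbitRel W M) m
      rw [← hw]
      exact (mem_groupAlgebraInvariants_iff k W).mp f.2 w m)

variable (W) in
noncomputable def invBasis :
    Module.Basis (Quotient (MulAction.orbitRel W M)) k (groupAlgebraInvariants k M W) :=
  Module.Basis.ofRepr (invRepr k W)

lemma coe_invBasis_apply (q : Quotient (MulAction.orbitRel W M)) (m : M) :
    (invBasis k W q : AddMonoidAlgebra k M).coeff m
      = if Quotient.mk (MulAction.orbitRel W M) m = q then 1 else 0 := by
  have h1 : invBasis k W q = (invRepr k W).symm (Finsupp.single q 1) :=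
    congrFun (Module.Basis.coe_ofRepr _) q
  rw [h1, invRepr, LinearEquiv.ofLinear_symm_apply]
  show (fromQ k W (Finsupp.single q 1)).coeff m = _
  rw [fromQ_apply, Finsupp.single_apply]
  simp [eq_comm]

end Aux

/-- Formation of the invariant ring of a group algebra under a permutation
action commutes with arbitrary base change: for a finite group `W` acting on a free abelian
group `M`, a commutative ring `k` and any `k`-algebra `k'`, the natural base change map
`k' ⊗_k (k[M]^W) → (k'[M])^W`, sending `c ⊗ f` to `c • (f` with coefficients pushed along
`k → k')`, is an isomorphism. -/
theorem groupAlgebraInvariants_baseChange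
    (k : Type*) [CommRing k] (M : Type*) [AddCommGroup M] [Module.Free ℤ M]
    (W : Type*) [Group W] [Finite W] [DistribMulAction W M]
    (k' : Type*) [CommRing k'] [Algebra k k'] :
    ∃ e : k' ⊗[k] (groupAlgebraInvariants k M W) ≃ₗ[k'] groupAlgebraInvariants k' M W,
      ∀ (c : k') (f : groupAlgebraInvariants k M W),
        (e (c ⊗ₜ f) : AddMonoidAlgebra k' M) =
          c • AddMonoidAlgebra.ofCoeff
            (Finsupp.mapRange (algebraMap k k') (map_zero _) (f : AddMonoidAlgebra k M).coeff) := by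
  classical
  let bk := invBasis k (M := M) W
  let bk' := invBasis k' (M := M) W
  let e := (bk.baseChange k').equiv bk' (Equiv.refl _)
  refine ⟨e, ?_⟩
  let φ : groupAlgebraInvariants k M W →ₗ[k] AddMonoidAlgebra k' M :=
    { toFun := fun f => AddMonoidAlgebra.ofCoeff
        (Finsupp.mapRange (algebraMap k k') (map_zero _) (f : AddMonoidAlgebra k M).coeff)
      map_add' := fun f g => by
        ext m
        show algebraMap k k' ((f : AddMonoidAlgebra k M).coeff m + (g : AddMonoidAlgebra k M).coeff m)
            = algebraMap k k' ((f : AddMonoidAlgebra k M).coeff m)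
              + algebraMap k k' ((g : AddMonoidAlgebra k M).coeff m)
        exact map_add _ _ _
      map_smul' := fun c f => by
        ext m
        show algebraMap k k' (c • ((f : AddMonoidAlgebra k M).coeff m))
            = c • (algebraMap k k' ((f : AddMonoidAlgebra k M).coeff m))
        rw [smul_eq_mul, map_mul, Algebra.smul_def] }
  let L : k' ⊗[k] (groupAlgebraInvariants k M W) →ₗ[k'] AddMonoidAlgebra k' M :=
    LinearMap.liftBaseChange k' φ
  have key : (groupAlgebraInvariants k' M W).subtype ∘ₗ (e : _ →ₗ[k'] _) = L := by
    apply (bk.baseChange k').ext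
    intro q
    have hL : (bk.baseChange k') q = (1 : k') ⊗ₜ[k] bk q := Module.Basis.baseChange_apply k' bk q
    have hE : e ((bk.baseChange k') q) = bk' q := Module.Basis.equiv_apply _ q bk' (Equiv.refl _)
    rw [LinearMap.comp_apply, LinearEquiv.coe_coe, hE, hL]
    show (bk' q : AddMonoidAlgebra k' M) = L ((1 : k') ⊗ₜ[k] bk q)
    rw [show L ((1 : k') ⊗ₜ[k] bk q) = (1 : k') • φ (bk q) from
      LinearMap.liftBaseChange_tmul k' φ 1 (bk q), one_smul]
    ext m
    show (bk' q : AddMonoidAlgebra k' M).coeff m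
        = Finsupp.mapRange (algebraMap k k') (map_zero _) (bk q : AddMonoidAlgebra k M).coeff m
    rw [Finsupp.mapRange_apply, coe_invBasis_apply, coe_invBasis_apply, apply_ite (algebraMap k k'),
      map_one, map_zero]
  intro c f
  have hk := LinearMap.congr_fun key (c ⊗ₜ[k] f)
  rw [LinearMap.comp_apply, LinearEquiv.coe_coe, Submodule.subtype_apply] at hk
  rw [hk]
  exact LinearMap.liftBaseChange_tmul k' φ c f
end
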